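/- Suppose y_i ⟨a_i, x*⟩ > 0 for all i = 1,…,m (measurements consistent with x*). Then f_MLE(t x*) := −(1/m) Σ_i log Φ(y_i ⟨a_i, t x*⟩) is strictly positive for all t > 0 but tends to 0 as t → +∞; hence inf over the ray {t x* : t > 0} of f_MLE is 0 and is not attained. -/

import Mathlib

open scoped InnerProductSpace

/-- The standard normal CDF. -/
noncomputable def Phi (u : ℝ) : ℝ :=
  ∫ v in Set.Iio u, (Real.sqrt (2 * Real.pi))⁻¹ * Real.exp (-v ^ 2 / 2)

open MeasureTheory Real Set Filter

lemma gauss_eq : (fun v : ℝ => (Real.sqrt (2 * Real.pi))⁻¹ * Real.exp (-v ^ 2 / 2))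
    = fun v => (Real.sqrt (2 * Real.pi))⁻¹ * Real.exp (-(1/2) * v ^ 2) := by
  funext v; ring_nf

lemma gauss_integrable : Integrable (fun v : ℝ => (Real.sqrt (2 * Real.pi))⁻¹ * Real.exp (-v ^ 2 / 2)) := by
  rw [gauss_eq]
  exact (integrable_exp_neg_mul_sq (by norm_num : (0:ℝ) < 1/2)).const_mul _

lemma gauss_total : ∫ v : ℝ, (Real.sqrt (2 * Real.pi))⁻¹ * Real.exp (-v ^ 2 / 2) = 1 := by
  rw [gauss_eq, MeasureTheory.integral_const_mul, integral_gaussian]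
  rw [inv_mul_eq_div, div_eq_one_iff_eq (by positivity)]
  rw [show Real.pi / (1/2) = 2 * Real.pi by ring]

lemma gauss_pos (v : ℝ) : 0 < (Real.sqrt (2 * Real.pi))⁻¹ * Real.exp (-v ^ 2 / 2) := by
  have := Real.pi_pos; positivity

lemma Phi_pos (u : ℝ) : 0 < Phi u := by
  rw [Phi, setIntegral_pos_iff_support_of_nonneg_ae]
  · have : (Function.support fun v : ℝ => (Real.sqrt (2 * Real.pi))⁻¹ * Real.exp (-v ^ 2 / 2)) = Set.univ := by
      ext v; simpa [Function.mem_support] using (gauss_pos v).ne'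
    rw [this, Set.univ_inter]
    simp [Real.volume_Iio]
  · exact Filter.Eventually.of_forall fun v => (gauss_pos v).le
  · exact gauss_integrable.integrableOn

lemma Phi_lt_one (u : ℝ) : Phi u < 1 := by
  have hsplit := intervalIntegral.integral_Iio_add_Ici (b := u)
    gauss_integrable.integrableOn gauss_integrable.integrableOn
  rw [gauss_total] at hsplit
  have hpos : 0 < ∫ v in Set.Ici u, (Real.sqrt (2 * Real.pi))⁻¹ * Real.exp (-v ^ 2 / 2) := by
    rw [setIntegral_pos_iff_support_of_nonneg_ae]
    · have : (Function.support fun v : ℝ => (Real.sqrt (2 * Real.pi))⁻¹ * Real.exp (-v ^ 2 / 2)) = Set.univ := by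
        ext v; simpa [Function.mem_support] using (gauss_pos v).ne'
      rw [this, Set.univ_inter]
      simp [Real.volume_Ici]
    · exact Filter.Eventually.of_forall fun v => (gauss_pos v).le
    · exact gauss_integrable.integrableOn
  have : Phi u = 1 - ∫ v in Set.Ici u, (Real.sqrt (2 * Real.pi))⁻¹ * Real.exp (-v ^ 2 / 2) := by
    rw [Phi]; linarith
  rw [this]; linarith

lemma Phi_tendsto : Filter.Tendsto Phi Filter.atTop (nhds 1) := by
  have := MeasureTheory.tendsto_setIntegral_of_monotone (ι := ℝ)
    (s := fun u => Set.Iio u) (f := fun v : ℝ => (Real.sqrt (2 * Real.pi))⁻¹ * Real.exp (-v ^ 2 / 2))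
    (fun u => measurableSet_Iio) (fun u v huv => Set.Iio_subset_Iio huv)
    (by rw [Set.iUnion_Iio]; exact gauss_integrable.integrableOn)
  rw [Set.iUnion_Iio] at this
  simp only [MeasureTheory.setIntegral_univ] at this
  rw [gauss_total] at this
  exact this

/-- If the 1-bit measurements are consistent with `x*` (i.e. `yᵢ⟨aᵢ, x*⟩ > 0` for all `i`),
then `f_MLE(t x*)` is strictly positive for every `t > 0`, tends to `0` as `t → +∞`,
and its infimum over the ray `{t x* : t > 0}` is `0` and is not attained. -/
theorem stmt_7 {n m : ℕ} (hm : 0 < m) (a : Fin m → EuclideanSpace ℝ (Fin n))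
    (y : Fin m → ℝ) (hy : ∀ i, y i = 1 ∨ y i = -1)
    (xstar : EuclideanSpace ℝ (Fin n)) (hxstar : xstar ≠ 0)
    (hcons : ∀ i, 0 < y i * ⟪a i, xstar⟫_ℝ)
    (f : ℝ → ℝ)
    (hf : ∀ t, f t = -(m : ℝ)⁻¹ * ∑ i, Real.log (Phi (y i * ⟪a i, t • xstar⟫_ℝ))) :
    (∀ t > 0, 0 < f t) ∧
    Filter.Tendsto f Filter.atTop (nhds 0) ∧
    IsGLB (f '' Set.Ioi 0) 0 ∧
    ∀ t > 0, f t ≠ 0 := by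
  set c : Fin m → ℝ := fun i => y i * ⟪a i, xstar⟫_ℝ with hc
  have hcpos : ∀ i, 0 < c i := hcons
  have hf' : ∀ t, f t = -(m : ℝ)⁻¹ * ∑ i, Real.log (Phi (t * c i)) := by
    intro t
    rw [hf]
    congr 1
    refine Finset.sum_congr rfl fun i _ => ?_
    rw [real_inner_smul_right]
    ring_nf
    simp only [hc]; ring_nf
  have hmpos : (0:ℝ) < (m : ℝ)⁻¹ := by positivity
  have hpos : ∀ t > 0, 0 < f t := by
    intro t ht
    rw [hf']
    have hsum : ∑ i, Real.log (Phi (t * c i)) < 0 := by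
      apply Finset.sum_neg
      · intro i _
        exact Real.log_neg (Phi_pos _) (Phi_lt_one _)
      · exact Finset.univ_nonempty_iff.mpr (Fin.pos_iff_nonempty.mp hm)
    nlinarith
  have htend : Filter.Tendsto f Filter.atTop (nhds 0) := by
    have h1 : ∀ i : Fin m, Filter.Tendsto (fun t => Real.log (Phi (t * c i)))
        Filter.atTop (nhds 0) := by
      intro i
      have h2 : Filter.Tendsto (fun t : ℝ => t * c i) Filter.atTop Filter.atTop :=
        Filter.Tendsto.atTop_mul_const (hcpos i) Filter.tendsto_id
      have h3 := Phi_tendsto.comp h2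
      have h4 : Filter.Tendsto Real.log (nhds 1) (nhds 0) := by
        simpa using (Real.continuousAt_log one_ne_zero).tendsto
      exact h4.comp h3
    have hsum : Filter.Tendsto (fun t => ∑ i, Real.log (Phi (t * c i)))
        Filter.atTop (nhds 0) := by
      have := tendsto_finset_sum (Finset.univ : Finset (Fin m)) (fun i _ => h1 i)
      simpa using this
    have := hsum.const_mul (-(m : ℝ)⁻¹)
    rw [mul_zero] at this
    exact this.congr fun t => (hf' t).symm
  refine ⟨hpos, htend, ⟨?_, ?_⟩, fun t ht => (hpos t ht).ne'⟩
  · rintro z ⟨t, ht, rfl⟩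
    exact (hpos t ht).le
  · intro b hb
    refine ge_of_tendsto htend ?_
    filter_upwards [Filter.eventually_gt_atTop 0] with t ht
    exact hb ⟨t, ht, rfl⟩
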